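/- For independent exponentials B_1,...,B_i with rates μ_1,...,μ_i > 0 and partial sums B_1^j (with B_1^0 := 0), for all x ≥ 0: P{B_1^{i-1} ≤ x < B_1^i} = (1/μ_i) f_{B_1^i}(x), where f_{B_1^i} is the density of B_1^i. -/

import Mathlib

open MeasureTheory ProbabilityTheory Set Real Filter Topology
open scoped ENNReal

lemma my_expMeasure_Iic {r : ℝ} (hr : 0 < r) (a : ℝ) :
    expMeasure r (Iic a) = ENNReal.ofReal (if 0 ≤ a then 1 - exp (-(r * a)) else 0) := by
  rw [expMeasure, gammaMeasure, withDensity_apply _ measurableSet_Iic]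
  exact lintegral_exponentialPDF_eq_antiDeriv hr a

lemma my_expMeasure_Iio_zero {r : ℝ} : expMeasure r (Iio 0) = 0 := by
  rw [expMeasure, gammaMeasure, withDensity_apply _ measurableSet_Iio]
  exact lintegral_gammaPDF_of_nonpos le_rfl

lemma my_expMeasure_Ioi {r : ℝ} (hr : 0 < r) {a : ℝ} (ha : 0 ≤ a) :
    expMeasure r (Ioi a) = ENNReal.ofReal (exp (-(r * a))) := by
  have : IsProbabilityMeasure (expMeasure r) := isProbabilityMeasure_expMeasure hr
  have h := measure_compl (μ := expMeasure r) (measurableSet_Iic (a := a)) (measure_ne_top _ _)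
  rw [compl_Iic] at h
  rw [h, measure_univ, my_expMeasure_Iic hr, if_pos ha,
    ENNReal.sub_eq_of_eq_add (by finiteness)]
  rw [← ENNReal.ofReal_add (by positivity) (by nlinarith [exp_pos (-(r*a)), exp_le_one_iff.2 (by nlinarith : -(r*a) ≤ 0)])]
  norm_num

/-- layer probability as integral against the law of S -/
lemma my_layer {Ω : Type*} [MeasurableSpace Ω] (P : Measure Ω) [IsProbabilityMeasure P]
    (S L : Ω → ℝ) (hmS : Measurable S) (hmL : Measurable L)
    (hSL : IndepFun S L P) {r : ℝ} (hr : 0 < r)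
    (hL : Measure.map L P = expMeasure r) (a : ℝ) :
    P {ω | S ω ≤ a ∧ a < S ω + L ω}
      = ∫⁻ s in Iic a, ENNReal.ofReal (exp (-(r * (a - s)))) ∂(Measure.map S P) := by
  have hprob : IsProbabilityMeasure (expMeasure r) := isProbabilityMeasure_expMeasure hr
  have hT : MeasurableSet {p : ℝ × ℝ | p.1 ≤ a ∧ a < p.1 + p.2} :=
    (measurableSet_le measurable_fst measurable_const).inter
      (measurableSet_lt measurable_const (measurable_fst.add measurable_snd))
  have hmap : Measure.map (fun ω => (S ω, L ω)) P
      = (Measure.map S P).prod (expMeasure r) := by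
    rw [← hL]
    exact (ProbabilityTheory.indepFun_iff_map_prod_eq_prod_map_map hmS.aemeasurable
      hmL.aemeasurable).mp hSL
  have hpre : {ω | S ω ≤ a ∧ a < S ω + L ω}
      = (fun ω => (S ω, L ω)) ⁻¹' {p : ℝ × ℝ | p.1 ≤ a ∧ a < p.1 + p.2} := rfl
  rw [hpre, ← Measure.map_apply (hmS.prodMk hmL) hT, hmap, Measure.prod_apply hT]
  rw [← lintegral_indicator (f := fun s => ENNReal.ofReal (exp (-(r * (a - s)))))
    measurableSet_Iic]
  refine lintegral_congr fun s => ?_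
  by_cases hs : s ≤ a
  · have : Prod.mk s ⁻¹' {p : ℝ × ℝ | p.1 ≤ a ∧ a < p.1 + p.2} = Ioi (a - s) := by
      ext t; simp [hs, sub_lt_iff_lt_add']
    rw [this, my_expMeasure_Ioi hr (by linarith), indicator_of_mem (mem_Iic.2 hs)]
  · have : Prod.mk s ⁻¹' {p : ℝ × ℝ | p.1 ≤ a ∧ a < p.1 + p.2} = ∅ := by
      ext t; simp [hs]
    rw [this, measure_empty, indicator_of_notMem (by simpa using hs)]

lemma my_main {Ω : Type*} [MeasurableSpace Ω] (P : Measure Ω) [IsProbabilityMeasure P]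
    (S L : Ω → ℝ) (hmS : Measurable S) (hmL : Measurable L)
    (hSL : IndepFun S L P) {r : ℝ} (hr : 0 < r)
    (hL : Measure.map L P = expMeasure r)
    (f : ℝ → ℝ) (hf_cont : ContinuousOn f (Ici 0))
    (hf_cdf : ∀ a : ℝ, (P {ω | S ω + L ω ≤ a}).toReal = ∫ t in Iic a, f t)
    (x : ℝ) (hx : 0 ≤ x) :
    (P {ω | S ω ≤ x ∧ x < S ω + L ω}).toReal = (1 / r) * f x := by
  set ν := Measure.map S P with hν
  have hνprob : IsProbabilityMeasure ν := Measure.isProbabilityMeasure_map hmS.aemeasurable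
  set C : ℝ → ℝ≥0∞ := fun a => ∫⁻ s in Iic a, ENNReal.ofReal (exp (r * s)) ∂ν with hC
  have hCfin : ∀ a, C a ≠ ⊤ := by
    intro a
    have h1 : C a ≤ ENNReal.ofReal (exp (r * a)) * ν (Iic a) := by
      rw [← setLIntegral_const]
      exact setLIntegral_mono measurable_const
        (fun s hs => ENNReal.ofReal_le_ofReal (exp_le_exp.2 (by nlinarith [mem_Iic.1 hs])))
    exact (h1.trans_lt (by finiteness)).ne
  have hfact : ∀ a, P {ω | S ω ≤ a ∧ a < S ω + L ω}
      = ENNReal.ofReal (exp (-(r * a))) * C a := by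
    intro a
    rw [my_layer P S L hmS hmL hSL hr hL a, hC, ← lintegral_const_mul' _ _ (by finiteness)]
    refine lintegral_congr fun s => ?_
    rw [← ENNReal.ofReal_mul (exp_nonneg _), ← exp_add]
    ring_nf
  have hE : ∀ a : ℝ, MeasurableSet {ω | S ω ≤ a ∧ a < S ω + L ω} := fun a =>
    (measurableSet_le hmS measurable_const).inter
      (measurableSet_lt measurable_const (hmS.add hmL))
  have hLneg : P {ω | L ω < 0} = 0 := by
    have h0 : {ω | L ω < 0} = L ⁻¹' (Iio 0) := rfl
    rw [h0, ← Measure.map_apply hmL measurableSet_Iio, hL, my_expMeasure_Iio_zero]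
  have hkey : ∀ a : ℝ, ν (Iic a)
      = P {ω | S ω + L ω ≤ a} + ENNReal.ofReal (exp (-(r * a))) * C a := by
    intro a
    have hunion : {ω | S ω ≤ a}
        = {ω | S ω + L ω ≤ a ∧ S ω ≤ a} ∪ {ω | S ω ≤ a ∧ a < S ω + L ω} := by
      ext ω
      constructor
      · intro h
        rcases le_or_gt (S ω + L ω) a with h' | h'
        · exact Or.inl ⟨h', h⟩
        · exact Or.inr ⟨h, h'⟩
      · rintro (⟨_, h⟩ | ⟨h, _⟩) <;> exact h
    have hdisj : Disjoint {ω | S ω + L ω ≤ a ∧ S ω ≤ a} {ω | S ω ≤ a ∧ a < S ω + L ω} := by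
      rw [Set.disjoint_left]
      rintro ω ⟨h1, _⟩ ⟨_, h2⟩
      exact absurd h1 (not_le.2 h2)
    have hA1eq : P {ω | S ω + L ω ≤ a ∧ S ω ≤ a} = P {ω | S ω + L ω ≤ a} := by
      refine le_antisymm (measure_mono fun ω h => h.1) ?_
      have hsub : {ω | S ω + L ω ≤ a}
          ⊆ {ω | S ω + L ω ≤ a ∧ S ω ≤ a} ∪ {ω | L ω < 0} := by
        intro ω h
        rcases le_or_gt (S ω) a with h' | h'
        · exact Or.inl ⟨h, h'⟩
        · have hh : S ω + L ω ≤ a := h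
          right
          show L ω < 0
          linarith
      calc P {ω | S ω + L ω ≤ a} ≤ P ({ω | S ω + L ω ≤ a ∧ S ω ≤ a} ∪ {ω | L ω < 0}) :=
            measure_mono hsub
        _ ≤ P {ω | S ω + L ω ≤ a ∧ S ω ≤ a} + P {ω | L ω < 0} := measure_union_le _ _
        _ = P {ω | S ω + L ω ≤ a ∧ S ω ≤ a} := by rw [hLneg, add_zero]
    have hm : ν (Iic a) = P {ω | S ω ≤ a} := by
      rw [hν, Measure.map_apply hmS measurableSet_Iic]
      rfl
    rw [hm, hunion, measure_union hdisj (hE a), hA1eq, hfact a]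
  set c : ℝ → ℝ := fun a => (C a).toReal with hc
  set G : ℝ → ℝ := fun a => (ν (Iic a)).toReal with hG
  set F : ℝ → ℝ := fun a => (P {ω | S ω + L ω ≤ a}).toReal with hFdef
  have hFGc : ∀ a, F a = G a - exp (-(r * a)) * c a := by
    intro a
    have h2 : G a = F a + exp (-(r * a)) * c a := by
      simp only [hG, hFdef, hc, hkey a, ENNReal.toReal_add (measure_ne_top _ _)
        (ENNReal.mul_ne_top ENNReal.ofReal_ne_top (hCfin a)), ENNReal.toReal_mul,
        ENNReal.toReal_ofReal (exp_nonneg _)]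
    linarith
  have hFf : ∀ a, F a = ∫ t in Iic a, f t := fun a => hf_cdf a
  -- integrability of f on Iic a0 for suitable a0 > x
  obtain ⟨n, hn⟩ : ∃ n : ℕ, P {ω | S ω + L ω ≤ (n : ℝ)} ≠ 0 := by
    by_contra h
    push_neg at h
    have h0 : P (⋃ n : ℕ, {ω | S ω + L ω ≤ (n : ℝ)}) = 0 := measure_iUnion_null h
    have huniv : (⋃ n : ℕ, {ω | S ω + L ω ≤ (n : ℝ)}) = univ := by
      ext ω
      simp only [mem_iUnion, mem_univ, iff_true, mem_setOf_eq]
      exact exists_nat_ge (S ω + L ω)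
    rw [huniv, measure_univ] at h0
    simp at h0
  set a0 : ℝ := max (n : ℝ) (x + 1) with ha0
  have hxa0 : x < a0 := lt_of_lt_of_le (by linarith) (le_max_right _ _)
  have hintf : IntegrableOn f (Iic a0) := by
    by_contra h
    have h0 : ∫ t in Iic a0, f t = 0 := integral_undef h
    have hP : P {ω | S ω + L ω ≤ a0} ≠ 0 := by
      intro h'
      exact hn (measure_mono_null
        (fun ω (hω : S ω + L ω ≤ (n : ℝ)) => hω.trans (le_max_left _ _)) h')
    have hF0 : F a0 ≠ 0 := by
      simp only [hFdef]
      rw [ENNReal.toReal_ne_zero]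
      exact ⟨hP, measure_ne_top _ _⟩
    exact hF0 (by rw [hFf a0, h0])
  -- FTC side
  have hcontx : ContinuousWithinAt f (Ioi x) x :=
    (hf_cont.continuousWithinAt (mem_Ici.2 hx)).mono
      (fun y (hy : y ∈ Ioi x) => le_of_lt (lt_of_le_of_lt hx hy))
  have hmeasf : StronglyMeasurableAtFilter f (𝓝[Ioi x] x) :=
    ⟨Ici x, mem_of_superset self_mem_nhdsWithin Ioi_subset_Ici_self,
      (hf_cont.mono (Ici_subset_Ici.2 hx)).aestronglyMeasurable measurableSet_Ici⟩
  have hderiv1 : HasDerivWithinAt F (f x) (Ici x) x := by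
    have h0 : HasDerivWithinAt (fun u => (∫ t in Iic x, f t) + ∫ t in x..u, f t)
        (f x) (Ici x) x :=
      (intervalIntegral.integral_hasDerivWithinAt_right
        (by simp [intervalIntegrable_iff_integrableOn_Ioc_of_le]) hmeasf hcontx).const_add _
    refine HasDerivWithinAt.congr_of_eventuallyEq h0 ?_ ?_
    · have hmem : Iio a0 ∈ 𝓝[Ici x] x := nhdsWithin_le_nhds (Iio_mem_nhds hxa0)
      filter_upwards [hmem, self_mem_nhdsWithin] with u hu (hxu : x ≤ u)
      rw [hFf u, intervalIntegral.integral_of_le hxu,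
        ← Iic_union_Ioc_eq_Iic hxu,
        setIntegral_union (Iic_disjoint_Ioc le_rfl) measurableSet_Ioc
          (hintf.mono_set (Iic_subset_Iic.2 (by linarith)))
          (hintf.mono_set ((Ioc_subset_Ioc_right (le_of_lt hu)).trans Ioc_subset_Iic_self |>.trans
            (Iic_subset_Iic.2 le_rfl)))]
    · simp [hFf x]
  -- difference bounds
  have hmint : Measurable (fun s : ℝ => ENNReal.ofReal (exp (r * s))) :=
    (Real.measurable_exp.comp (measurable_id.const_mul r)).ennreal_ofReal
  have hGdiff : ∀ y, x ≤ y → G y - G x = (ν (Ioc x y)).toReal := by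
    intro y hxy
    have h1 : ν (Iic y) = ν (Iic x) + ν (Ioc x y) := by
      rw [← Iic_union_Ioc_eq_Iic hxy,
        measure_union (Iic_disjoint_Ioc le_rfl) measurableSet_Ioc]
    simp only [hG, h1, ENNReal.toReal_add (measure_ne_top _ _) (measure_ne_top _ _)]
    ring
  have hIfin : ∀ y : ℝ, (∫⁻ s in Ioc x y, ENNReal.ofReal (exp (r * s)) ∂ν) ≠ ⊤ :=
    fun y => ne_top_of_le_ne_top (hCfin y)
      (lintegral_mono_set (fun s hs => mem_Iic.2 hs.2))
  have hcdiff : ∀ y, x ≤ y →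
      c y - c x = (∫⁻ s in Ioc x y, ENNReal.ofReal (exp (r * s)) ∂ν).toReal := by
    intro y hxy
    have h1 : C y = C x + ∫⁻ s in Ioc x y, ENNReal.ofReal (exp (r * s)) ∂ν := by
      rw [hC]
      dsimp only
      rw [← Iic_union_Ioc_eq_Iic hxy,
        lintegral_union measurableSet_Ioc (Iic_disjoint_Ioc le_rfl)]
    simp only [hc, h1, ENNReal.toReal_add (hCfin x) (hIfin y)]
    ring
  have hIbounds : ∀ y, x ≤ y →
      exp (r * x) * (ν (Ioc x y)).toReal
        ≤ (∫⁻ s in Ioc x y, ENNReal.ofReal (exp (r * s)) ∂ν).toReal ∧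
      (∫⁻ s in Ioc x y, ENNReal.ofReal (exp (r * s)) ∂ν).toReal
        ≤ exp (r * y) * (ν (Ioc x y)).toReal := by
    intro y hxy
    constructor
    · have hlow : ENNReal.ofReal (exp (r * x)) * ν (Ioc x y)
          ≤ ∫⁻ s in Ioc x y, ENNReal.ofReal (exp (r * s)) ∂ν := by
        rw [← setLIntegral_const]
        exact setLIntegral_mono hmint
          (fun s hs => ENNReal.ofReal_le_ofReal (exp_le_exp.2 (by nlinarith [hs.1])))
      have := ENNReal.toReal_mono (hIfin y) hlow
      rwa [ENNReal.toReal_mul, ENNReal.toReal_ofReal (exp_nonneg _)] at this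
    · have hhigh : (∫⁻ s in Ioc x y, ENNReal.ofReal (exp (r * s)) ∂ν)
          ≤ ENNReal.ofReal (exp (r * y)) * ν (Ioc x y) := by
        rw [← setLIntegral_const]
        exact setLIntegral_mono measurable_const
          (fun s hs => ENNReal.ofReal_le_ofReal (exp_le_exp.2 (by nlinarith [hs.2])))
      have := ENNReal.toReal_mono (by finiteness) hhigh
      rwa [ENNReal.toReal_mul, ENNReal.toReal_ofReal (exp_nonneg _)] at this
  -- derivative from the key identity
  have hderiv2 : HasDerivWithinAt F (r * exp (-(r * x)) * c x) (Ici x) x := by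
    have hu : HasDerivWithinAt (fun y => -exp (-(r * y)) * c x + exp (-(r * x)) * c x)
        (r * exp (-(r * x)) * c x) (Ici x) x := by
      have h1 := (hasDerivAt_neg_exp_mul_exp (r := r) (x := x)).mul_const (c x)
      exact (h1.add_const _).hasDerivWithinAt
    rw [hasDerivWithinAt_iff_isLittleO] at hu ⊢
    have hR : (fun y => F y - F x - (-exp (-(r * y)) * c x + exp (-(r * x)) * c x))
        =o[𝓝[Ici x] x] fun y => y - x := by
      rw [Asymptotics.isLittleO_iff]
      intro ε hε
      have hεr : 0 < ε / r := div_pos hε hr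
      -- find n making ν (Ioc x (x + 1/(n+1))) small
      have hanti : Antitone (fun n : ℕ => Ioc x (x + 1 / ((n : ℝ) + 1))) := by
        intro m k hmk
        refine Ioc_subset_Ioc le_rfl (add_le_add_right ?_ x)
        apply one_div_le_one_div_of_le (by positivity)
        exact_mod_cast add_le_add_left (Nat.cast_le.2 hmk) 1
      have hiInter : (⋂ n : ℕ, Ioc x (x + 1 / ((n : ℝ) + 1))) = ∅ := by
        rw [eq_empty_iff_forall_notMem]
        intro t ht
        rw [mem_iInter] at ht
        have h1 : x < t := (ht 0).1
        obtain ⟨k, hk⟩ := exists_nat_one_div_lt (sub_pos.2 h1)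
        have h2 := (ht k).2
        linarith
      have htend := tendsto_measure_iInter_atTop (μ := ν)
        (s := fun n : ℕ => Ioc x (x + 1 / ((n : ℝ) + 1)))
        (fun n => measurableSet_Ioc.nullMeasurableSet) hanti ⟨0, measure_ne_top _ _⟩
      rw [hiInter, measure_empty] at htend
      have hev : ∀ᶠ k : ℕ in atTop,
          ν (Ioc x (x + 1 / ((k : ℝ) + 1))) < ENNReal.ofReal (ε / r) := by
        exact htend.eventually_lt_const (by simp [ENNReal.ofReal_pos.2 hεr])
      obtain ⟨k, hk⟩ := hev.exists
      have hmem : Iio (x + 1 / ((k : ℝ) + 1)) ∈ 𝓝[Ici x] x :=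
        nhdsWithin_le_nhds (Iio_mem_nhds (by
          have h9 : (0:ℝ) < 1 / ((k:ℝ)+1) := by positivity
          linarith))
      filter_upwards [self_mem_nhdsWithin, hmem] with y (hxy : x ≤ y) (hy : y < _)
      have hδlt : (ν (Ioc x y)).toReal < ε / r := by
        refine lt_of_le_of_lt (ENNReal.toReal_mono (measure_ne_top _ _)
          (measure_mono (Ioc_subset_Ioc_right hy.le))) ?_
        exact ENNReal.toReal_lt_of_lt_ofReal hk
      set δ := (ν (Ioc x y)).toReal with hδ
      have hδ0 : 0 ≤ δ := ENNReal.toReal_nonneg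
      set I := (∫⁻ s in Ioc x y, ENNReal.ofReal (exp (r * s)) ∂ν).toReal with hI
      obtain ⟨hlo, hhi⟩ := hIbounds y hxy
      have hRval : F y - F x - (-exp (-(r * y)) * c x + exp (-(r * x)) * c x)
          = δ - exp (-(r * y)) * I := by
        rw [hFGc y, hFGc x]
        rw [show G y - rexp (-(r*y)) * c y - (G x - rexp (-(r*x)) * c x)
            - (-rexp (-(r*y)) * c x + rexp (-(r*x)) * c x)
            = (G y - G x) - rexp (-(r*y)) * (c y - c x) by ring,
          hGdiff y hxy, hcdiff y hxy]
      rw [hRval]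
      have e1 : exp (-(r * y)) * exp (r * y) = 1 := by rw [← exp_add]; simp
      have e2 : exp (-(r * y)) * exp (r * x) = exp (-(r * (y - x))) := by
        rw [← exp_add]; ring_nf
      have e3 : 1 - exp (-(r * (y - x))) ≤ r * (y - x) := by
        nlinarith [add_one_le_exp (-(r * (y - x)))]
      have hey : 0 < exp (-(r * y)) := exp_pos _
      have hRnn : 0 ≤ δ - exp (-(r * y)) * I := by nlinarith
      have hRub : δ - exp (-(r * y)) * I ≤ δ * (r * (y - x)) := by nlinarith
      rw [Real.norm_eq_abs, Real.norm_eq_abs, abs_of_nonneg hRnn,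
        abs_of_nonneg (by linarith : (0:ℝ) ≤ y - x)]
      have h4 : δ * (r * (y - x)) ≤ (ε / r) * (r * (y - x)) :=
        mul_le_mul_of_nonneg_right hδlt.le (by nlinarith)
      have h5 : (ε / r) * (r * (y - x)) = ε * (y - x) := by field_simp
      linarith
    have heq : (fun y => F y - F x - (y - x) • (r * exp (-(r * x)) * c x))
        = (fun y => (-exp (-(r * y)) * c x + exp (-(r * x)) * c x)
            - (-exp (-(r * x)) * c x + exp (-(r * x)) * c x)
            - (y - x) • (r * exp (-(r * x)) * c x)
          + (F y - F x - (-exp (-(r * y)) * c x + exp (-(r * x)) * c x))) := by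
      funext y
      simp only [smul_eq_mul]
      ring
    rw [heq]
    exact hu.add hR
  -- conclude
  have hUD : UniqueDiffWithinAt ℝ (Ici x) x := uniqueDiffOn_Ici x x self_mem_Ici
  have hfx : f x = r * exp (-(r * x)) * c x := by
    rw [← hderiv1.derivWithin hUD, ← hderiv2.derivWithin hUD]
  rw [hfx, hfact x]
  rw [ENNReal.toReal_mul, ENNReal.toReal_ofReal (exp_nonneg _)]
  field_simp
  ring


/-- For independent exponentials `B 0, ..., B i` (i.e. `i+1` of them, so at least
one) with positive rates, partial sums `B_1^j` (`B_1^0 := 0`), and `f` the (continuous) density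
of the full sum `B_1^{i+1}`, for all `x ≥ 0`:
`P{B_1^i ≤ x < B_1^{i+1}} = (1/μ_last) f x`. -/
theorem hypoexp_layer_prob_eq_density
    {Ω : Type*} [MeasurableSpace Ω] (P : Measure Ω) [IsProbabilityMeasure P]
    (i : ℕ) (μ : Fin (i + 1) → ℝ) (hμ : ∀ l, 0 < μ l)
    (B : Fin (i + 1) → Ω → ℝ) (hmB : ∀ l, Measurable (B l))
    (hindep : iIndepFun B P)
    (hdist : ∀ l, Measure.map (B l) P = expMeasure (μ l))
    (f : ℝ → ℝ)
    (hf_cont : ContinuousOn f (Set.Ici 0))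
    (hf_cdf : ∀ a : ℝ,
      (P {ω | (∑ l : Fin (i + 1), B l ω) ≤ a}).toReal = ∫ t in Set.Iic a, f t)
    (x : ℝ) (hx : 0 ≤ x) :
    (P {ω | (∑ l : Fin i, B l.castSucc ω) ≤ x ∧ x < ∑ l : Fin (i + 1), B l ω}).toReal
      = (1 / μ (Fin.last i)) * f x := by
  have hmS : Measurable fun ω => ∑ l : Fin i, B l.castSucc ω :=
    Finset.measurable_sum _ (fun l _ => hmB _)
  have hmL : Measurable (B (Fin.last i)) := hmB _
  have hSL : IndepFun (fun ω => ∑ l : Fin i, B l.castSucc ω) (B (Fin.last i)) P := by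
    have h := hindep.indepFun_finsetSum_of_notMem hmB
      (s := Finset.univ.erase (Fin.last i)) (Finset.notMem_erase _ _)
    have hfun : (∑ j ∈ Finset.univ.erase (Fin.last i), B j)
        = fun ω => ∑ l : Fin i, B l.castSucc ω := by
      funext ω
      have h1 : (∑ j ∈ Finset.univ.erase (Fin.last i), B j) ω + B (Fin.last i) ω
          = ∑ j : Fin (i + 1), B j ω := by
        rw [Finset.sum_apply]
        exact Finset.sum_erase_add _ _ (Finset.mem_univ _)
      have h2 : (∑ l : Fin i, B l.castSucc ω) + B (Fin.last i) ω
          = ∑ j : Fin (i + 1), B j ω :=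
        (Fin.sum_univ_castSucc (f := fun j => B j ω)).symm
      exact add_right_cancel (h1.trans h2.symm)
    rwa [hfun] at h
  have hev : ∀ a : ℝ,
      {ω | (∑ l : Fin i, B l.castSucc ω) + B (Fin.last i) ω ≤ a}
        = {ω | (∑ l : Fin (i + 1), B l ω) ≤ a} := by
    intro a
    ext ω
    simp only [mem_setOf_eq, Fin.sum_univ_castSucc]
  have hmain := my_main P (fun ω => ∑ l : Fin i, B l.castSucc ω) (B (Fin.last i)) hmS hmL hSL
    (hμ (Fin.last i)) (hdist (Fin.last i)) f hf_cont
    (fun a => by rw [show {ω | (fun ω => ∑ l : Fin i, B l.castSucc ω) ω + B (Fin.last i) ω ≤ a}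
        = {ω | (∑ l : Fin (i + 1), B l ω) ≤ a} from hev a]; exact hf_cdf a) x hx
  have hgoal : {ω | (∑ l : Fin i, B l.castSucc ω) ≤ x ∧ x < ∑ l : Fin (i + 1), B l ω}
      = {ω | (∑ l : Fin i, B l.castSucc ω) ≤ x
          ∧ x < (∑ l : Fin i, B l.castSucc ω) + B (Fin.last i) ω} := by
    ext ω
    simp only [mem_setOf_eq, Fin.sum_univ_castSucc]
  rw [hgoal]
  exact hmain
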